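/- Define g(x,p) = -α(px, (1-p)x)·p + β((1-p)x)·(1-p). Under Assumptions: α is C¹, increasing in each argument, α(u,0) > 0 for u > 0, ∂α/∂u ≥ ∂α/∂v everywhere; β is C¹, decreasing, v ↦ β(v)v increasing, β(v) > 0 for v > 0. Then for each x > 0 there exists a unique p̄(x) ∈ (0,1) with g(x, p̄(x)) = 0, and the map p ↦ g(x,p) is strictly decreasing on [0,1]. -/

import Mathlib

open Set

open Set MeasureTheory Filter Topology intervalIntegral
open scoped ENNReal NNReal

lemma mono_of_hasDerivAt_nonneg (φ φd : ℝ → ℝ)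
    (hd : ∀ x, HasDerivAt φ (φd x) x) (h0 : ∀ x, 0 ≤ φd x) : Monotone φ := by
  have hdiff : Differentiable ℝ φ := fun x => (hd x).differentiableAt
  refine monotone_of_deriv_nonneg hdiff fun x => ?_
  rw [(hd x).deriv]; exact h0 x

lemma meas_of_deriv (φ φd : ℝ → ℝ) (hd : ∀ x, HasDerivAt φ (φd x) x) :
    Measurable φd := by
  have : φd = deriv φ := funext fun x => ((hd x).deriv).symm
  rw [this]; exact measurable_deriv φ

lemma ftc_lower (φ φd : ℝ → ℝ)
    (hd : ∀ x, HasDerivAt φ (φd x) x) (h0 : ∀ x, 0 ≤ φd x)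
    (a b : ℝ) (hab : a ≤ b) :
    ENNReal.ofReal (φ b - φ a) ≤ ∫⁻ v in Ioo a b, ENNReal.ofReal (φd v) := by
  have hmeas : Measurable φd := meas_of_deriv φ φd hd
  by_cases hfin : (∫⁻ v in Ioo a b, ENNReal.ofReal (φd v)) = ⊤
  · rw [hfin]; exact le_top
  · have hint : IntegrableOn φd (Ioo a b) := by
      constructor
      · exact hmeas.aestronglyMeasurable
      · rw [hasFiniteIntegral_iff_ofReal (ae_of_all _ h0)]
        exact lt_top_iff_ne_top.mpr hfin
    have hii : IntervalIntegrable φd volume a b :=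
      (intervalIntegrable_iff_integrableOn_Ioo_of_le hab).mpr hint
    have hftc : ∫ x in a..b, φd x = φ b - φ a :=
      integral_eq_sub_of_hasDerivAt (fun x _ => hd x) hii
    rw [← hftc, intervalIntegral.integral_of_le hab, integral_Ioc_eq_integral_Ioo,
      ofReal_integral_eq_lintegral_ofReal hint (ae_of_all _ h0)]

lemma mono_of_dini (Φ : ℝ → ℝ) (t₁ t₂ : ℝ) (h12 : t₁ ≤ t₂) (C : ℝ) (hC : 0 ≤ C)
    (hLip : ∀ s t : ℝ, t₁ ≤ s → s ≤ t → t ≤ t₂ → Φ s - C * (t - s) ≤ Φ t)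
    (hDini : ∀ t, t₁ ≤ t → t < t₂ → ∀ ε > (0:ℝ), ∀ δ > (0:ℝ),
        ∃ h : ℝ, 0 < h ∧ h < δ ∧ Φ t - ε * h ≤ Φ (t + h)) :
    Φ t₁ ≤ Φ t₂ := by
  have key : ∀ ε > (0:ℝ), Φ t₁ - ε * (t₂ - t₁) ≤ Φ t₂ := by
    intro ε hε
    set S : Set ℝ := {t | t ∈ Icc t₁ t₂ ∧ Φ t₁ - ε * (t - t₁) ≤ Φ t} with hS
    have h1S : t₁ ∈ S := ⟨⟨le_refl _, h12⟩, by simp⟩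
    have hbdd : BddAbove S := ⟨t₂, fun t ht => ht.1.2⟩
    have hne : S.Nonempty := ⟨t₁, h1S⟩
    set t₀ := sSup S with ht₀def
    have ht₀ge : t₁ ≤ t₀ := le_csSup hbdd h1S
    have ht₀le : t₀ ≤ t₂ := csSup_le hne fun t ht => ht.1.2
    have ht₀S : Φ t₁ - ε * (t₀ - t₁) ≤ Φ t₀ := by
      refine le_of_forall_pos_le_add fun η hη => ?_
      rcases eq_or_lt_of_le ht₀ge with h | h
      · rw [← h]; simp; nlinarith
      · obtain ⟨t', ht'S, ht'gt⟩ := exists_lt_of_lt_csSup hne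
          (show max t₁ (t₀ - η / (C + 1)) < t₀ by
            rcases max_cases t₁ (t₀ - η / (C + 1)) with ⟨he, _⟩ | ⟨he, _⟩ <;> rw [he]
            · exact h
            · have : 0 < η / (C + 1) := by positivity
              linarith)
        have ht'le : t' ≤ t₀ := le_csSup hbdd ht'S
        have h1 : Φ t' - C * (t₀ - t') ≤ Φ t₀ := hLip t' t₀ ht'S.1.1 ht'le ht₀le
        have h2 : Φ t₁ - ε * (t' - t₁) ≤ Φ t' := ht'S.2
        have h3 : t₀ - t' ≤ η / (C + 1) := by
          have := le_max_right t₁ (t₀ - η / (C + 1))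
          linarith [ht'gt.le.trans (le_refl t'), (le_max_right t₁ (t₀ - η / (C+1))).trans ht'gt.le]
        have h4 : C * (t₀ - t') ≤ η := by
          have h5 : C * (t₀ - t') ≤ C * (η / (C + 1)) := mul_le_mul_of_nonneg_left h3 hC
          have h6 : C * (η / (C + 1)) ≤ η := by
            rw [← sub_nonneg]
            have he : η - C * (η / (C + 1)) = η / (C + 1) := by
              field_simp
              ring
            rw [he]; positivity
          linarith
        have h5 : ε * (t' - t₁) ≤ ε * (t₀ - t₁) := by nlinarith
        linarith
    rcases eq_or_lt_of_le ht₀le with h | h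
    · rw [h] at ht₀S; exact ht₀S
    · exfalso
      obtain ⟨hh, hh0, hhδ, hineq⟩ := hDini t₀ ht₀ge h ε hε (t₂ - t₀) (by linarith)
      have hmem : t₀ + hh ∈ S := by
        refine ⟨⟨by linarith, by linarith⟩, ?_⟩
        have : Φ t₁ - ε * (t₀ - t₁) - ε * hh ≤ Φ (t₀ + hh) := by linarith
        calc Φ t₁ - ε * (t₀ + hh - t₁) = Φ t₁ - ε * (t₀ - t₁) - ε * hh := by ring
          _ ≤ Φ (t₀ + hh) := this
      have := le_csSup hbdd hmem
      linarith
  refine le_of_forall_pos_le_add fun η hη => ?_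
  have hε : (0:ℝ) < η / (t₂ - t₁ + 1) := div_pos hη (by linarith)
  have := key _ hε
  have h2 : η / (t₂ - t₁ + 1) * (t₂ - t₁) ≤ η := by
    rw [div_mul_eq_mul_div, div_le_iff₀ (by linarith)]
    nlinarith
  linarith

lemma diag_mono (α αu αv : ℝ → ℝ → ℝ)
    (hαu_deriv : ∀ u v : ℝ, HasDerivAt (fun t => α t v) (αu u v) u)
    (hαv_deriv : ∀ u v : ℝ, HasDerivAt (fun t => α u t) (αv u v) v)
    (hα_nonneg : ∀ u v, 0 ≤ α u v)
    (hαu_nonneg : ∀ u v, 0 ≤ αu u v) (hαv_nonneg : ∀ u v, 0 ≤ αv u v)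
    (hαuv : ∀ u v, αv u v ≤ αu u v)
    (a b s : ℝ) (hs : 0 ≤ s) : α a b ≤ α (a + s) (b - s) := by
  have monU : ∀ v, Monotone (fun u => α u v) := fun v =>
    mono_of_hasDerivAt_nonneg _ _ (fun u => hαu_deriv u v) (fun u => hαu_nonneg u v)
  have monV : ∀ u, Monotone (fun v => α u v) := fun u =>
    mono_of_hasDerivAt_nonneg _ _ (fun v => hαv_deriv u v) (fun v => hαv_nonneg u v)
  have contV : ∀ u, Continuous (fun v => α u v) := fun u =>
    continuous_iff_continuousAt.mpr fun v => (hαv_deriv u v).continuousAt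
  have intV : ∀ u c d : ℝ, IntervalIntegrable (fun v => α u v) volume c d := fun u c d =>
    (contV u).intervalIntegrable c d
  -- main monotonicity of the averaged function
  have hPhiMono : ∀ r : ℝ, 0 < r →
      (∫ v in b..(b + r), α a v) ≤ ∫ v in (b - s)..(b - s + r), α (a + s) v := by
    intro r hr
    set Φ : ℝ → ℝ := fun t => ∫ v in (b - t)..(b - t + r), α (a + t) v with hΦdef
    have hC : (0:ℝ) ≤ α (a + s) (b + r) := hα_nonneg _ _
    have key : Φ 0 ≤ Φ s := by
      apply mono_of_dini Φ 0 s hs (α (a + s) (b + r)) hC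
      · -- Lipschitz from below
        intro t' t h1 h2 h3
        have key1 : (∫ v in (b - t)..(b - t + r), α (a + t') v) ≤ Φ t := by
          apply integral_mono_on (by linarith) (intV _ _ _) (intV _ _ _)
          intro v _; exact monU v (by linarith : a + t' ≤ a + t)
        have split1 : (∫ v in (b - t)..(b - t + r), α (a + t') v)
            = (∫ v in (b - t)..(b - t'), α (a + t') v)
              + ∫ v in (b - t')..(b - t + r), α (a + t') v :=
          (integral_add_adjacent_intervals (intV _ _ _) (intV _ _ _)).symm
        have split2 : Φ t' = (∫ v in (b - t')..(b - t + r), α (a + t') v)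
              + ∫ v in (b - t + r)..(b - t' + r), α (a + t') v :=
          (integral_add_adjacent_intervals (intV _ _ _) (intV _ _ _)).symm
        have pos1 : 0 ≤ ∫ v in (b - t)..(b - t'), α (a + t') v :=
          integral_nonneg (by linarith) (fun v _ => hα_nonneg _ _)
        have bnd : (∫ v in (b - t + r)..(b - t' + r), α (a + t') v)
            ≤ α (a + s) (b + r) * (t - t') := by
          have step : (∫ v in (b - t + r)..(b - t' + r), α (a + t') v)
              ≤ ∫ _v in (b - t + r)..(b - t' + r), α (a + s) (b + r) := by
            apply integral_mono_on (by linarith) (intV _ _ _)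
              (continuous_const.intervalIntegrable _ _)
            intro v hv
            calc α (a + t') v ≤ α (a + s) v := monU v (by linarith)
              _ ≤ α (a + s) (b + r) := monV (a + s) (by
                  have := hv.2; simp only [mem_Icc] at hv; linarith [hv.2])
          rw [intervalIntegral.integral_const, smul_eq_mul] at step
          calc (∫ v in (b - t + r)..(b - t' + r), α (a + t') v)
              ≤ (b - t' + r - (b - t + r)) * α (a + s) (b + r) := step
            _ = α (a + s) (b + r) * (t - t') := by ring
        linarith
      · -- Dini condition
        intro t ht0 hts ε hε δ hδ
        by_contra hcon
        push_neg at hcon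
        set u₀ : ℝ := a + t with hu₀
        set w : ℝ := b - t with hw
        set D : ℝ := α u₀ (w + r) - α u₀ w with hD
        have hDnn : 0 ≤ D := sub_nonneg.mpr (monV u₀ (by linarith))
        set κ : ℝ := min δ r with hκ
        have hκpos : 0 < κ := lt_min hδ hr
        set hseq : ℕ → ℝ := fun n => κ / (2 * (n + 1)) with hhseq
        have hpos : ∀ n, 0 < hseq n := fun n => by positivity
        have hlt : ∀ n, hseq n < δ := by
          intro n
          have h1 : hseq n ≤ κ / 2 := by
            apply div_le_div_of_nonneg_left hκpos.le (by norm_num) ?_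
            · have : (1:ℝ) ≤ n + 1 := by exact_mod_cast Nat.one_le_iff_ne_zero.mpr (Nat.succ_ne_zero n)
              nlinarith
          have : κ / 2 < κ := by linarith
          have := min_le_left δ r
          calc hseq n ≤ κ / 2 := h1
            _ < κ := by linarith
            _ ≤ δ := min_le_left δ r
        have hltr : ∀ n, hseq n < r := by
          intro n
          have h1 : hseq n ≤ κ / 2 := by
            apply div_le_div_of_nonneg_left hκpos.le (by norm_num) ?_
            · have : (1:ℝ) ≤ n + 1 := by exact_mod_cast Nat.one_le_iff_ne_zero.mpr (Nat.succ_ne_zero n)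
              nlinarith
          calc hseq n ≤ κ / 2 := h1
            _ < κ := by linarith
            _ ≤ r := min_le_right δ r
        have htend : Tendsto hseq atTop (𝓝 0) := by
          have : hseq = fun n : ℕ => (κ / 2) * (1 / (n + 1)) := by
            funext n; rw [hhseq]; field_simp
          rw [this]
          have : Tendsto (fun n : ℕ => 1 / ((n : ℝ) + 1)) atTop (𝓝 0) := tendsto_one_div_add_atTop_nhds_zero_nat
          simpa using this.const_mul (κ / 2)
        -- quantities
        set A : ℕ → ℝ := fun n => ∫ v in (w - hseq n)..w, α (u₀ + hseq n) v with hA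
        set B : ℕ → ℝ := fun n =>
          ∫ v in w..(w - hseq n + r), (α (u₀ + hseq n) v - α u₀ v) with hB
        set Cq : ℕ → ℝ := fun n => ∫ v in (w - hseq n + r)..(w + r), α u₀ v with hCq
        have hident : ∀ n, Φ (t + hseq n) - Φ t = A n + B n - Cq n := by
          intro n
          set h' := hseq n with hh'
          have e1 : Φ (t + h') = ∫ v in (w - h')..(w - h' + r), α (u₀ + h') v := by
            have e2 : b - (t + h') = w - h' := by rw [hw]; ring
            have e3 : a + (t + h') = u₀ + h' := by rw [hu₀]; ring
            rw [hΦdef]; simp only []; rw [e2, e3]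
          have s1 : (∫ v in (w - h')..(w - h' + r), α (u₀ + h') v)
              = (∫ v in (w - h')..w, α (u₀ + h') v)
                + ∫ v in w..(w - h' + r), α (u₀ + h') v :=
            (integral_add_adjacent_intervals (intV _ _ _) (intV _ _ _)).symm
          have s2 : (∫ v in w..(w - h' + r), (α (u₀ + h') v - α u₀ v))
              = (∫ v in w..(w - h' + r), α (u₀ + h') v)
                - ∫ v in w..(w - h' + r), α u₀ v :=
            integral_sub (intV _ _ _) (intV _ _ _)
          have s3 : Φ t = (∫ v in w..(w - h' + r), α u₀ v)
                + ∫ v in (w - h' + r)..(w + r), α u₀ v := by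
            have e4 : Φ t = ∫ v in w..(w + r), α u₀ v := by rw [hΦdef]
            rw [e4]
            exact (integral_add_adjacent_intervals (intV _ _ _) (intV _ _ _)).symm
          rw [e1, s1, s3]
          have : B n = (∫ v in w..(w - h' + r), α (u₀ + h') v)
                - ∫ v in w..(w - h' + r), α u₀ v := s2
          rw [hA, hCq]
          simp only []
          linarith [this]
        have hAbnd : ∀ n, hseq n * α u₀ (w - hseq n) ≤ A n := by
          intro n
          have step : (∫ _v in (w - hseq n)..w, α u₀ (w - hseq n)) ≤ A n := by
            apply integral_mono_on (by linarith [hpos n])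
              (continuous_const.intervalIntegrable _ _) (intV _ _ _)
            intro v hv
            simp only [mem_Icc] at hv
            calc α u₀ (w - hseq n) ≤ α u₀ v := monV u₀ hv.1
              _ ≤ α (u₀ + hseq n) v := monU v (by linarith [hpos n])
          rw [intervalIntegral.integral_const, smul_eq_mul] at step
          calc hseq n * α u₀ (w - hseq n) = (w - (w - hseq n)) * α u₀ (w - hseq n) := by ring
            _ ≤ A n := step
        have hCbnd : ∀ n, Cq n ≤ hseq n * α u₀ (w + r) := by
          intro n
          have step : Cq n ≤ ∫ _v in (w - hseq n + r)..(w + r), α u₀ (w + r) := by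
            apply integral_mono_on (by linarith [hpos n]) (intV _ _ _)
              (continuous_const.intervalIntegrable _ _)
            intro v hv
            simp only [mem_Icc] at hv
            exact monV u₀ hv.2
          rw [intervalIntegral.integral_const, smul_eq_mul] at step
          calc Cq n ≤ (w + r - (w - hseq n + r)) * α u₀ (w + r) := step
            _ = hseq n * α u₀ (w + r) := by ring
        have hBnn : ∀ n, 0 ≤ B n := by
          intro n
          apply integral_nonneg (by linarith [hltr n])
          intro v _
          exact sub_nonneg.mpr (monU v (by linarith [hpos n]))
        -- from contradiction hypothesis
        have hBsmall : ∀ n, B n < hseq n * (α u₀ (w + r) - α u₀ (w - hseq n) - ε) := by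
          intro n
          have := hcon (hseq n) (hpos n) (hlt n)
          have hid := hident n
          have h1 : A n + B n - Cq n < -(ε * hseq n) := by
            rw [← hid]; linarith [this]
          have := hAbnd n; have := hCbnd n
          nlinarith [hAbnd n, hCbnd n, h1]
        have hconv : Tendsto (fun n => α u₀ (w - hseq n)) atTop (𝓝 (α u₀ w)) := by
          have h1 : Tendsto (fun n => w - hseq n) atTop (𝓝 w) := by
            simpa using tendsto_const_nhds.sub htend
          exact ((contV u₀).tendsto w).comp h1
        have hev : ∀ᶠ n in atTop, B n < hseq n * (D - 3 / 4 * ε) := by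
          have h1 : ∀ᶠ n in atTop, α u₀ w - ε / 4 < α u₀ (w - hseq n) := by
            have := hconv.eventually (eventually_gt_nhds (show α u₀ w - ε / 4 < α u₀ w by linarith))
            exact this
          filter_upwards [h1] with n hn
          have := hBsmall n
          have hmul : hseq n * (α u₀ (w + r) - α u₀ (w - hseq n) - ε)
              ≤ hseq n * (D - 3 / 4 * ε) := by
            apply mul_le_mul_of_nonneg_left _ (hpos n).le
            rw [hD]; linarith
          linarith
        rcases le_or_gt D (3 / 4 * ε) with hDle | hDgt
        · obtain ⟨n, hn⟩ := hev.exists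
          have : hseq n * (D - 3 / 4 * ε) ≤ 0 :=
            mul_nonpos_of_nonneg_of_nonpos (hpos n).le (by linarith)
          linarith [hBnn n]
        · -- Fatou argument
          set q : ℕ → ℝ → ℝ := fun n v => (α (u₀ + hseq n) v - α u₀ v) / hseq n with hq
          set gE : ℕ → ℝ → ℝ≥0∞ := fun n =>
            (Ioo w (w - hseq n + r)).indicator (fun v => ENNReal.ofReal (q n v)) with hgE
          have hqcont : ∀ n, Continuous (q n) := fun n =>
            ((contV (u₀ + hseq n)).sub (contV u₀)).div_const _
          have hmeasg : ∀ n, Measurable (gE n) := fun n =>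
            ((ENNReal.continuous_ofReal.comp (hqcont n)).measurable).indicator measurableSet_Ioo
          have hqnn : ∀ n v, 0 ≤ q n v := fun n v =>
            div_nonneg (sub_nonneg.mpr (monU v (by linarith [hpos n]))) (hpos n).le
          have hlintg : ∀ n, (∫⁻ v, gE n v) = ENNReal.ofReal (B n / hseq n) := by
            intro n
            rw [hgE]
            simp only []
            rw [lintegral_indicator measurableSet_Ioo]
            have hintq : IntegrableOn (q n) (Ioo w (w - hseq n + r)) := by
              apply ((hqcont n).integrableOn_Icc).mono_set Ioo_subset_Icc_self
            rw [← ofReal_integral_eq_lintegral_ofReal hintq (ae_of_all _ (hqnn n))]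
            congr 1
            rw [← integral_Ioc_eq_integral_Ioo,
              ← intervalIntegral.integral_of_le (by linarith [hltr n] : w ≤ w - hseq n + r)]
            rw [hB]
            simp only []
            rw [intervalIntegral.integral_div]
          have hfatou := lintegral_liminf_le (μ := volume) (u := atTop) hmeasg
          have hlb : ∀ v, (Ioo w (w + r)).indicator
              (fun v => ENNReal.ofReal (αv u₀ v)) v ≤ atTop.liminf fun n => gE n v := by
            intro v
            by_cases hv : v ∈ Ioo w (w + r)
            · rw [indicator_of_mem hv]
              have hv1 := hv.1; have hv2 := hv.2
              have hevv : ∀ᶠ n in atTop, gE n v = ENNReal.ofReal (q n v) := by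
                have h1 : ∀ᶠ n in atTop, hseq n < w + r - v :=
                  htend.eventually (eventually_lt_nhds (by linarith : (0:ℝ) < w + r - v))
                filter_upwards [h1] with n hn
                rw [hgE]; simp only []
                rw [indicator_of_mem (by constructor <;> [exact hv1; linarith] : v ∈ Ioo w (w - hseq n + r))]
              have hqtend : Tendsto (fun n => q n v) atTop (𝓝 (αu u₀ v)) := by
                have hd := hαu_deriv u₀ v
                rw [hasDerivAt_iff_tendsto_slope] at hd
                have hseqtend : Tendsto (fun n => u₀ + hseq n) atTop (𝓝[≠] u₀) := by
                  rw [tendsto_nhdsWithin_iff]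
                  constructor
                  · simpa using tendsto_const_nhds.add htend
                  · exact Eventually.of_forall fun n => by
                      simp only [mem_compl_iff, mem_singleton_iff]
                      have := hpos n; intro hcontra; nlinarith [hpos n]
                have := hd.comp hseqtend
                have heq : (fun n => slope (fun u => α u v) u₀ (u₀ + hseq n)) = fun n => q n v := by
                  funext n
                  rw [slope_def_field]
                  rw [hq]; simp only []
                  rw [div_eq_div_iff (by linarith [hpos n] : u₀ + hseq n - u₀ ≠ 0) (ne_of_gt (hpos n))]
                  ring
                rw [← heq]
                exact this
              have hgtend : Tendsto (fun n => gE n v) atTop (𝓝 (ENNReal.ofReal (αu u₀ v))) := by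
                have := (ENNReal.continuous_ofReal.tendsto _).comp hqtend
                exact this.congr' (hevv.mono fun n h => h.symm)
              rw [hgtend.liminf_eq]
              exact ENNReal.ofReal_le_ofReal (hαuv u₀ v)
            · rw [indicator_of_notMem hv]; exact zero_le
          have hlow : ENNReal.ofReal D ≤ atTop.liminf fun n => ∫⁻ v, gE n v := by
            calc ENNReal.ofReal D ≤ ∫⁻ v in Ioo w (w + r), ENNReal.ofReal (αv u₀ v) :=
                ftc_lower (fun v' => α u₀ v') (fun v' => αv u₀ v')
                  (fun v' => hαv_deriv u₀ v') (fun v' => hαv_nonneg u₀ v') w (w + r) (by linarith)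
              _ = ∫⁻ v, (Ioo w (w + r)).indicator (fun v => ENNReal.ofReal (αv u₀ v)) v :=
                (lintegral_indicator measurableSet_Ioo _).symm
              _ ≤ ∫⁻ v, atTop.liminf fun n => gE n v := by
                apply lintegral_mono; exact hlb
              _ ≤ atTop.liminf fun n => ∫⁻ v, gE n v := hfatou
          have hup : (atTop.liminf fun n => ∫⁻ v, gE n v) ≤ ENNReal.ofReal (D - 3 / 4 * ε) := by
            apply liminf_le_of_frequently_le'
            apply Eventually.frequently
            filter_upwards [hev] with n hn
            rw [hlintg n]
            apply ENNReal.ofReal_le_ofReal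
            rw [div_le_iff₀ (hpos n)]
            nlinarith [hn]
          have hfinal : D ≤ D - 3 / 4 * ε := by
            have := hlow.trans hup
            rwa [ENNReal.ofReal_le_ofReal_iff (by linarith)] at this
          linarith
    -- unfold Φ at key
    have e0 : Φ 0 = ∫ v in b..(b + r), α a v := by
      rw [hΦdef]; simp only []; rw [sub_zero, add_zero]
    have es : Φ s = ∫ v in (b - s)..(b - s + r), α (a + s) v := by rw [hΦdef]
    rw [← e0, ← es]; exact key
  -- now take r → 0
  set rseq : ℕ → ℝ := fun n => 1 / (n + 1) with hrseq
  have hrpos : ∀ n, 0 < rseq n := fun n => by positivity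
  have hrtend : Tendsto rseq atTop (𝓝 0) := by
    rw [hrseq]; exact tendsto_one_div_add_atTop_nhds_zero_nat
  have hlim : ∀ a' b' : ℝ,
      Tendsto (fun n => (∫ v in b'..(b' + rseq n), α a' v) / rseq n) atTop (𝓝 (α a' b')) := by
    intro a' b'
    have hDer : HasDerivAt (fun y => ∫ v in b'..y, α a' v) (α a' b') b' :=
      intervalIntegral.integral_hasDerivAt_right (intV a' b' b')
        (contV a').stronglyMeasurable.stronglyMeasurableAtFilter
        ((contV a').continuousAt)
    rw [hasDerivAt_iff_tendsto_slope] at hDer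
    have hseqtend : Tendsto (fun n => b' + rseq n) atTop (𝓝[≠] b') := by
      rw [tendsto_nhdsWithin_iff]
      constructor
      · simpa using tendsto_const_nhds.add hrtend
      · exact Eventually.of_forall fun n => by
          simp only [mem_compl_iff, mem_singleton_iff]
          intro hcontra; nlinarith [hrpos n]
    have hcomp := hDer.comp hseqtend
    have heq : (fun n => slope (fun y => ∫ v in b'..y, α a' v) b' (b' + rseq n))
        = fun n => (∫ v in b'..(b' + rseq n), α a' v) / rseq n := by
      funext n
      rw [slope_def_field]
      rw [intervalIntegral.integral_same]
      have : b' + rseq n - b' = rseq n := by ring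
      rw [sub_zero, this]
    rw [Function.comp_def, heq] at hcomp
    exact hcomp
  refine le_of_tendsto_of_tendsto' (hlim a b) (hlim (a + s) (b - s)) fun n => ?_
  exact (div_le_div_iff_of_pos_right (hrpos n)).mpr (hPhiMono (rseq n) (hrpos n))

/-- For each `x > 0` there is a unique `p̄(x) ∈ (0,1)` with `g(x, p̄(x)) = 0`,
where `g(x,p) = -α(px,(1-p)x)p + β((1-p)x)(1-p)`, and `p ↦ g(x,p)` is strictly
decreasing on `[0,1]`. -/
theorem chemostat_fast_proportion_exists_unique
    (α : ℝ → ℝ → ℝ) (β : ℝ → ℝ) (αu αv : ℝ → ℝ → ℝ) (β' : ℝ → ℝ)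
    (hαu_deriv : ∀ u v : ℝ, HasDerivAt (fun t => α t v) (αu u v) u)
    (hαv_deriv : ∀ u v : ℝ, HasDerivAt (fun t => α u t) (αv u v) v)
    (hβ_deriv : ∀ v : ℝ, HasDerivAt β (β' v) v)
    (hα_nonneg : ∀ u v, 0 ≤ α u v) (hβ_nonneg : ∀ v, 0 ≤ β v)
    (hαu_nonneg : ∀ u v, 0 ≤ αu u v) (hαv_nonneg : ∀ u v, 0 ≤ αv u v)
    (hαuv : ∀ u v, αv u v ≤ αu u v)
    (hα0 : ∀ u > (0 : ℝ), 0 < α u 0)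
    (hβ'_nonpos : ∀ v, β' v ≤ 0)
    (hβv_mono : StrictMonoOn (fun v => β v * v) (Ici 0))
    (hβ_pos : ∀ v > (0 : ℝ), 0 < β v) :
    ∀ x > (0 : ℝ),
      (∃! p : ℝ, p ∈ Ioo (0 : ℝ) 1 ∧
        -α (p * x) ((1 - p) * x) * p + β ((1 - p) * x) * (1 - p) = 0) ∧
      StrictAntiOn (fun p => -α (p * x) ((1 - p) * x) * p + β ((1 - p) * x) * (1 - p))
        (Icc (0 : ℝ) 1) := by
  intro x hx
  set g : ℝ → ℝ := fun p => -α (p * x) ((1 - p) * x) * p + β ((1 - p) * x) * (1 - p) with hgdef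
  have monV : ∀ u, Monotone (fun v => α u v) := fun u =>
    mono_of_hasDerivAt_nonneg _ _ (fun v => hαv_deriv u v) (fun v => hαv_nonneg u v)
  have hθmono : ∀ p q : ℝ, p ≤ q → α (p * x) ((1 - p) * x) ≤ α (q * x) ((1 - q) * x) := by
    intro p q hpq
    have h := diag_mono α αu αv hαu_deriv hαv_deriv hα_nonneg hαu_nonneg hαv_nonneg hαuv
      (p * x) ((1 - p) * x) ((q - p) * x) (by nlinarith)
    have e1 : p * x + (q - p) * x = q * x := by ring
    have e2 : (1 - p) * x - (q - p) * x = (1 - q) * x := by ring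
    rwa [e1, e2] at h
  have hanti : StrictAntiOn g (Icc (0:ℝ) 1) := by
    intro p hp q hq hpq
    have hθ := hθmono p q hpq.le
    have hα1 : α (p * x) ((1 - p) * x) * p ≤ α (q * x) ((1 - q) * x) * q := by
      have s1 : α (p * x) ((1 - p) * x) * p ≤ α (q * x) ((1 - q) * x) * p :=
        mul_le_mul_of_nonneg_right hθ hp.1
      have s2 : α (q * x) ((1 - q) * x) * p ≤ α (q * x) ((1 - q) * x) * q :=
        mul_le_mul_of_nonneg_left hpq.le (hα_nonneg _ _)
      linarith
    have hβlt : β ((1 - q) * x) * (1 - q) < β ((1 - p) * x) * (1 - p) := by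
      have hvq : (0:ℝ) ≤ (1 - q) * x := by nlinarith [hq.2]
      have hvp : (0:ℝ) ≤ (1 - p) * x := by nlinarith [hp.2]
      have hlt : (1 - q) * x < (1 - p) * x := by nlinarith
      have hm := hβv_mono hvq hvp hlt
      simp only [] at hm
      by_contra hle
      push_neg at hle
      have hmul := mul_le_mul_of_nonneg_right hle hx.le
      nlinarith [hmul, hm]
    show g q < g p
    simp only [hgdef]
    linarith
  refine ⟨?_, hanti⟩
  have contθ : Continuous (fun p => α (p * x) ((1 - p) * x)) := by
    rw [continuous_iff_continuousAt]
    intro p₀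
    rw [Metric.continuousAt_iff]
    intro ε hε
    have hcu : ContinuousAt (fun u => α u ((1 - p₀) * x)) (p₀ * x) :=
      (hαu_deriv (p₀ * x) ((1 - p₀) * x)).continuousAt
    rw [Metric.continuousAt_iff] at hcu
    obtain ⟨δ', hδ', hball⟩ := hcu ε hε
    refine ⟨δ' / x, by positivity, ?_⟩
    intro q hq
    rw [Real.dist_eq] at hq ⊢
    have hqx : dist (q * x) (p₀ * x) < δ' := by
      rw [Real.dist_eq, show q * x - p₀ * x = (q - p₀) * x by ring, abs_mul, abs_of_pos hx]
      calc |q - p₀| * x < (δ' / x) * x := mul_lt_mul_of_pos_right hq hx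
        _ = δ' := by field_simp
    have hmid := hball hqx
    rw [Real.dist_eq] at hmid
    rcases le_total p₀ q with hc | hc
    · have h1 : α (p₀ * x) ((1 - p₀) * x) ≤ α (q * x) ((1 - q) * x) := hθmono _ _ hc
      have h2 : α (q * x) ((1 - q) * x) ≤ α (q * x) ((1 - p₀) * x) := monV (q * x) (by nlinarith)
      rw [abs_sub_lt_iff] at hmid ⊢
      constructor <;> linarith [hmid.1, hmid.2]
    · have h1 : α (q * x) ((1 - q) * x) ≤ α (p₀ * x) ((1 - p₀) * x) := hθmono _ _ hc
      have h2 : α (q * x) ((1 - p₀) * x) ≤ α (q * x) ((1 - q) * x) := monV (q * x) (by nlinarith)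
      rw [abs_sub_lt_iff] at hmid ⊢
      constructor <;> linarith [hmid.1, hmid.2]
  have contβ : Continuous β := continuous_iff_continuousAt.mpr fun v => (hβ_deriv v).continuousAt
  have contg : Continuous g := by
    rw [hgdef]
    apply Continuous.add
    · exact contθ.neg.mul continuous_id
    · exact (contβ.comp ((continuous_const.sub continuous_id).mul continuous_const)).mul
        (continuous_const.sub continuous_id)
  have hg0 : 0 < g 0 := by
    have he : g 0 = β x := by simp [hgdef]
    rw [he]; exact hβ_pos x hx
  have hg1 : g 1 < 0 := by
    have he : g 1 = -α x 0 := by simp [hgdef]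
    rw [he]; simpa using hα0 x hx
  have hIVT := intermediate_value_Icc' (zero_le_one) contg.continuousOn
  obtain ⟨p, hpIcc, hgp⟩ := hIVT ⟨hg1.le, hg0.le⟩
  have hpIoo : p ∈ Ioo (0:ℝ) 1 := by
    constructor
    · rcases eq_or_lt_of_le hpIcc.1 with h | h
      · exfalso; rw [← h] at hgp; linarith
      · exact h
    · rcases eq_or_lt_of_le hpIcc.2 with h | h
      · exfalso; rw [h] at hgp; linarith
      · exact h
  refine ⟨p, ⟨hpIoo, hgp⟩, ?_⟩
  rintro p' ⟨hp'Ioo, hgp'⟩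
  have hgp'' : g p' = 0 := hgp'
  by_contra hne
  rcases lt_or_gt_of_ne hne with hlt | hlt
  · have := hanti (Ioo_subset_Icc_self hp'Ioo) (Ioo_subset_Icc_self hpIoo) hlt
    rw [hgp, hgp''] at this
    exact lt_irrefl 0 this
  · have := hanti (Ioo_subset_Icc_self hpIoo) (Ioo_subset_Icc_self hp'Ioo) hlt
    rw [hgp, hgp''] at this
    exact lt_irrefl 0 this
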